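/- arXiv:2106.04458 — 5 statements merged into one kernel-verified Lean document; each statement's English description precedes it below -/
import Mathlib

section
/- For every real p > 1 there exists a constant C = C(p) > 0 such that for all vectors a, b in ℝ^N, ⟨|a|^{p-2} a − |b|^{p-2} b, a − b⟩ ≥ C |a−b|² / (|a|+|b|)^{2−p}, where the right-hand side is interpreted as 0 when a = b = 0. -/
set_option maxHeartbeats 1000000

private lemma aux_mul (x r : ℝ) (hx : 0 ≤ x) (hr : r ≠ 0) : x ^ (r - 1) * x = x ^ r := by
  rcases eq_or_lt_of_le hx with h | h
  · rw [← h, mul_zero, Real.zero_rpow hr]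
  · rw [Real.rpow_sub h, Real.rpow_one]
    field_simp

private lemma aux_L1 (q A B : ℝ) (hq : 0 < q) (hA : 0 ≤ A) (hB : 0 ≤ B) (hBA : B ≤ A) :
    (2 : ℝ) ^ (-q) * (A + B) ^ q ≤ A ^ q + B ^ q := by
  have h1 : (A + B) / 2 ≤ A := by linarith
  have h2 : ((A + B) / 2) ^ q ≤ A ^ q := Real.rpow_le_rpow (by positivity) h1 hq.le
  have h3 : ((A + B) / 2) ^ q = (2 : ℝ) ^ (-q) * (A + B) ^ q := by
    rw [Real.div_rpow (by linarith) (by norm_num), Real.rpow_neg (by norm_num)]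
    ring
  have h4 : (0 : ℝ) ≤ B ^ q := Real.rpow_nonneg hB q
  linarith [h3 ▸ h2]

private lemma aux_L2 (q A B : ℝ) (hq : 0 < q) (hB : 0 ≤ B) (hBA : B ≤ A) (hA : 0 < A) :
    min q ((2 : ℝ) ^ (1 - q)) * ((A - B) * (A + B) ^ (q - 1)) ≤ A ^ q - B ^ q := by
  have hMnn : (0 : ℝ) ≤ (A + B) ^ (q - 1) := Real.rpow_nonneg (by linarith) _
  have hABnn : (0 : ℝ) ≤ A - B := by linarith
  rcases le_or_gt 1 q with hq1 | hq1
  · -- q ≥ 1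
    have hq1' : (0 : ℝ) ≤ q - 1 := by linarith
    have f1 : A ^ (q - 1) * A = A ^ q := aux_mul A q hA.le hq.ne'
    have f2 : B ^ (q - 1) * B = B ^ q := aux_mul B q hB hq.ne'
    have h3 : B ^ (q - 1) ≤ A ^ (q - 1) := Real.rpow_le_rpow hB hBA hq1'
    have key1 : A ^ (q - 1) * (A - B) ≤ A ^ q - B ^ q := by
      have := mul_le_mul_of_nonneg_right h3 hB
      nlinarith
    have h1 : (A + B) / 2 ≤ A := by linarith
    have h2 : ((A + B) / 2) ^ (q - 1) ≤ A ^ (q - 1) :=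
      Real.rpow_le_rpow (by positivity) h1 hq1'
    have h5 : ((A + B) / 2) ^ (q - 1) = (2 : ℝ) ^ (1 - q) * (A + B) ^ (q - 1) := by
      rw [Real.div_rpow (by linarith) (by norm_num),
        show (1 - q) = -(q - 1) by ring, Real.rpow_neg (by norm_num)]
      ring
    have key2 : (2 : ℝ) ^ (1 - q) * (A + B) ^ (q - 1) ≤ A ^ (q - 1) := h5 ▸ h2
    have key3 := mul_le_mul_of_nonneg_right key2 hABnn
    have key4 : min q ((2 : ℝ) ^ (1 - q)) * ((A - B) * (A + B) ^ (q - 1)) ≤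
        (2 : ℝ) ^ (1 - q) * ((A - B) * (A + B) ^ (q - 1)) :=
      mul_le_mul_of_nonneg_right (min_le_right _ _) (mul_nonneg hABnn hMnn)
    nlinarith [key1, key3, key4]
  · -- q < 1 : tangent line inequality from Bernoulli
    have hAq : (0 : ℝ) < A ^ q := Real.rpow_pos_of_pos hA q
    have hs : (-1 : ℝ) ≤ B / A - 1 := by
      have : 0 ≤ B / A := div_nonneg hB hA.le
      linarith
    have hb : (B / A) ^ q ≤ 1 + q * (B / A - 1) := by
      have := rpow_one_add_le_one_add_mul_self hs hq.le hq1.le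
      rwa [show (1 : ℝ) + (B / A - 1) = B / A by ring] at this
    have hb2 : B ^ q ≤ A ^ q * (1 + q * (B / A - 1)) := by
      have := mul_le_mul_of_nonneg_left hb hAq.le
      rwa [Real.div_rpow hB hA.le, mul_div_cancel₀ _ (ne_of_gt hAq)] at this
    have f1 : A ^ (q - 1) * A = A ^ q := aux_mul A q hA.le hq.ne'
    have hAdiv : A ^ q * (B / A) = A ^ (q - 1) * B := by
      rw [← f1]; field_simp
    have key1 : q * (A ^ (q - 1) * (A - B)) ≤ A ^ q - B ^ q := by
      have : A ^ q * (1 + q * (B / A - 1)) = A ^ q + q * (A ^ (q - 1) * B) - q * A ^ q := by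
        rw [← f1]; field_simp; ring
      rw [this] at hb2
      rw [← f1] at hb2 ⊢
      nlinarith
    have h2 : (A + B) ^ (q - 1) ≤ A ^ (q - 1) :=
      Real.rpow_le_rpow_of_nonpos hA (by linarith) (by linarith)
    have key3 := mul_le_mul_of_nonneg_right h2 hABnn
    have key4 : min q ((2 : ℝ) ^ (1 - q)) * ((A - B) * (A + B) ^ (q - 1)) ≤
        q * ((A - B) * (A + B) ^ (q - 1)) :=
      mul_le_mul_of_nonneg_right (min_le_left _ _) (mul_nonneg hABnn hMnn)
    nlinarith [key1, mul_le_mul_of_nonneg_left key3 hq.le, key4]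

private lemma aux_key (p A B t : ℝ) (hp : 1 < p) (hA : 0 ≤ A) (hB : 0 ≤ B)
    (hABpos : 0 < A + B) (ht2 : -(A * B) ≤ t) (ht1 : t ≤ A * B) :
    min (min (p - 1) 1) ((2 : ℝ) ^ (-(p - 1))) * (A ^ 2 - 2 * t + B ^ 2) * (A + B) ^ (p - 2) ≤
      A ^ (p - 2) * (A ^ 2 - t) + B ^ (p - 2) * (B ^ 2 - t) := by
  set C : ℝ := min (min (p - 1) 1) ((2 : ℝ) ^ (-(p - 1))) with hCdef
  have hCpos : 0 < C :=
    lt_min (lt_min (by linarith) one_pos) (Real.rpow_pos_of_pos (by norm_num) _)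
  set M : ℝ := (A + B) ^ (p - 2) with hMdef
  have hMpos : (0 : ℝ) < M := Real.rpow_pos_of_pos hABpos _
  have hq : (0 : ℝ) < p - 1 := by linarith
  have f1 : A ^ (p - 2) * A = A ^ (p - 1) := by
    have := aux_mul A (p - 1) hA (ne_of_gt hq)
    rwa [show p - 1 - 1 = p - 2 by ring] at this
  have f2 : B ^ (p - 2) * B = B ^ (p - 1) := by
    have := aux_mul B (p - 1) hB (ne_of_gt hq)
    rwa [show p - 1 - 1 = p - 2 by ring] at this
  have g1 : A ^ (p - 2) * A ^ 2 = A ^ (p - 1) * A := by rw [pow_two, ← mul_assoc, f1]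
  have g2 : B ^ (p - 2) * B ^ 2 = B ^ (p - 1) * B := by rw [pow_two, ← mul_assoc, f2]
  -- endpoint E2 (t = -AB)
  have hL1 : (2 : ℝ) ^ (-(p - 1)) * (A + B) ^ (p - 1) ≤ A ^ (p - 1) + B ^ (p - 1) := by
    rcases le_total B A with h | h
    · exact aux_L1 (p - 1) A B hq hA hB h
    · have := aux_L1 (p - 1) B A hq hB hA h
      rwa [add_comm B A, add_comm (B ^ (p - 1)) (A ^ (p - 1))] at this
  have hABM : (A + B) ^ 2 * M = (A + B) ^ (p - 1) * (A + B) := by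
    rw [hMdef, pow_two]
    have e1 := aux_mul (A + B) (p - 1) hABpos.le (ne_of_gt hq)
    rw [show p - 1 - 1 = p - 2 by ring] at e1
    rw [← e1]; ring
  have hE2 : C * (A + B) ^ 2 * M ≤ (A ^ (p - 1) + B ^ (p - 1)) * (A + B) := by
    have hC2 : C ≤ (2 : ℝ) ^ (-(p - 1)) := min_le_right _ _
    calc C * (A + B) ^ 2 * M = C * ((A + B) ^ (p - 1) * (A + B)) := by
          rw [mul_assoc, hABM]
      _ ≤ (2 : ℝ) ^ (-(p - 1)) * ((A + B) ^ (p - 1) * (A + B)) :=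
          mul_le_mul_of_nonneg_right hC2
            (mul_nonneg (Real.rpow_nonneg hABpos.le _) hABpos.le)
      _ ≤ (A ^ (p - 1) + B ^ (p - 1)) * (A + B) := by
          have := mul_le_mul_of_nonneg_right hL1 hABpos.le
          nlinarith
  -- endpoint E1 (t = AB)
  have hCc1 : C ≤ min (p - 1) ((2 : ℝ) ^ (1 - (p - 1))) := by
    refine le_min (le_trans (min_le_left _ _) (min_le_left _ _)) ?_
    refine le_trans (min_le_right _ _) ?_
    exact Real.rpow_le_rpow_of_exponent_le (by norm_num) (by linarith)
  have hE1 : C * (A - B) ^ 2 * M ≤ (A ^ (p - 1) - B ^ (p - 1)) * (A - B) := by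
    have hsqnn : (0 : ℝ) ≤ (A - B) ^ 2 * M := mul_nonneg (sq_nonneg _) hMpos.le
    have hc : C * ((A - B) ^ 2 * M) ≤ min (p - 1) ((2 : ℝ) ^ (1 - (p - 1))) * ((A - B) ^ 2 * M) :=
      mul_le_mul_of_nonneg_right hCc1 hsqnn
    rcases le_total B A with h | h
    · have hApos : 0 < A := by linarith
      have key := aux_L2 (p - 1) A B hq hB h hApos
      rw [show p - 1 - 1 = p - 2 by ring] at key
      have key2 := mul_le_mul_of_nonneg_right key (by linarith : (0 : ℝ) ≤ A - B)
      rw [← hMdef] at key2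
      linarith [key2, hc]
    · have hBpos : 0 < B := by linarith
      have key := aux_L2 (p - 1) B A hq hA h hBpos
      rw [show p - 1 - 1 = p - 2 by ring, add_comm B A] at key
      have key2 := mul_le_mul_of_nonneg_right key (by linarith : (0 : ℝ) ≤ B - A)
      rw [← hMdef] at key2
      linarith [key2, hc]
  -- linear interpolation in t
  have g3 : A ^ (p - 2) * (A * B) = A ^ (p - 1) * B := by rw [← mul_assoc, f1]
  have g4 : B ^ (p - 2) * (A * B) = B ^ (p - 1) * A := by
    rw [mul_comm A B, ← mul_assoc, f2]
  rcases le_total (A ^ (p - 2) + B ^ (p - 2)) (2 * C * M) with h | h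
  · have hk : 0 ≤ (2 * C * M - (A ^ (p - 2) + B ^ (p - 2))) * (t + A * B) :=
      mul_nonneg (by linarith) (by linarith)
    nlinarith [hE2, hk, g1, g2, g3, g4]
  · have hk : 0 ≤ ((A ^ (p - 2) + B ^ (p - 2)) - 2 * C * M) * (A * B - t) :=
      mul_nonneg (by linarith) (by linarith)
    nlinarith [hE1, hk, g1, g2, g3, g4]

theorem stmt0 (p : ℝ) (hp : 1 < p) :
    ∃ C : ℝ, 0 < C ∧ ∀ (N : ℕ) (a b : EuclideanSpace ℝ (Fin N)),
      C * ‖a - b‖ ^ 2 / (‖a‖ + ‖b‖) ^ (2 - p) ≤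
        (inner ℝ ((‖a‖ ^ (p - 2)) • a - (‖b‖ ^ (p - 2)) • b) (a - b) : ℝ) := by
  refine ⟨min (min (p - 1) 1) ((2 : ℝ) ^ (-(p - 1))), lt_min (lt_min (by linarith) one_pos)
    (Real.rpow_pos_of_pos (by norm_num) _), fun N a b => ?_⟩
  have hA : (0 : ℝ) ≤ ‖a‖ := norm_nonneg a
  have hB : (0 : ℝ) ≤ ‖b‖ := norm_nonneg b
  by_cases hAB : ‖a‖ + ‖b‖ = 0
  · have ha : a = 0 := norm_eq_zero.1 (by linarith)
    have hb : b = 0 := norm_eq_zero.1 (by linarith)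
    simp [ha, hb]
  · have hABpos : 0 < ‖a‖ + ‖b‖ := lt_of_le_of_ne (by linarith) (Ne.symm hAB)
    have hMpos : (0 : ℝ) < (‖a‖ + ‖b‖) ^ (p - 2) := Real.rpow_pos_of_pos hABpos _
    have hMe : (‖a‖ + ‖b‖) ^ (2 - p) = ((‖a‖ + ‖b‖) ^ (p - 2))⁻¹ := by
      rw [show (2 - p) = -(p - 2) by ring, Real.rpow_neg hABpos.le]
    rw [hMe, div_eq_mul_inv, inv_inv]
    have hin : (inner ℝ ((‖a‖ ^ (p - 2)) • a - (‖b‖ ^ (p - 2)) • b) (a - b) : ℝ)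
        = ‖a‖ ^ (p - 2) * (‖a‖ ^ 2 - (inner ℝ a b : ℝ))
          + ‖b‖ ^ (p - 2) * (‖b‖ ^ 2 - (inner ℝ a b : ℝ)) := by
      rw [inner_sub_left, inner_sub_right, inner_sub_right, real_inner_smul_left,
        real_inner_smul_left, real_inner_smul_left, real_inner_smul_left,
        real_inner_self_eq_norm_sq, real_inner_self_eq_norm_sq, real_inner_comm b a]
      ring
    have hnorm : ‖a - b‖ ^ 2 = ‖a‖ ^ 2 - 2 * (inner ℝ a b : ℝ) + ‖b‖ ^ 2 :=
      norm_sub_sq_real a b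
    rw [hin, hnorm]
    have hcs : |(inner ℝ a b : ℝ)| ≤ ‖a‖ * ‖b‖ := abs_real_inner_le_norm a b
    exact aux_key p ‖a‖ ‖b‖ (inner ℝ a b) hp hA hB hABpos (abs_le.1 hcs).1 (abs_le.1 hcs).2
end

section
/- Let 1 < p < ∞ and let g : ℝ → ℝ be an increasing differentiable function. Define G(t) = ∫₀ᵗ g'(τ)^{1/p} dτ. Then for every a, b ∈ ℝ, |a−b|^{p-2} (a−b) (g(a) − g(b)) ≥ |G(a) − G(b)|^p. -/
open MeasureTheory Set intervalIntegral
open scoped ENNReal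

lemma aux_deriv_nonneg (g : ℝ → ℝ) (hgmono : Monotone g)
    (hgdiff : Differentiable ℝ g) (x : ℝ) : 0 ≤ deriv g x := by
  have h := hasDerivAt_iff_tendsto_slope.mp (hgdiff x).hasDerivAt
  refine ge_of_tendsto h ?_
  filter_upwards with y
  rw [slope_def_field]
  rcases le_total x y with h' | h'
  · exact div_nonneg (sub_nonneg.2 (hgmono h')) (sub_nonneg.2 h')
  · exact div_nonneg_of_nonpos (sub_nonpos.2 (hgmono h')) (sub_nonpos.2 h')

lemma aux_deriv_intInt (g : ℝ → ℝ) (hgmono : Monotone g)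
    (hgdiff : Differentiable ℝ g) (b a : ℝ) :
    IntervalIntegrable (deriv g) volume b a :=
  intervalIntegrable_deriv_of_nonneg (hgdiff.continuous.continuousOn)
    (fun x _ => (hgdiff x).hasDerivAt)
    (fun x _ => aux_deriv_nonneg g hgmono hgdiff x)

lemma aux_rpow_intInt (p : ℝ) (hp : 1 < p) (g : ℝ → ℝ) (hgmono : Monotone g)
    (hgdiff : Differentiable ℝ g) (b a : ℝ) :
    IntervalIntegrable (fun τ => (deriv g τ) ^ (1 / p)) volume b a := by
  have hmeas : Measurable fun τ => (deriv g τ) ^ (1 / p) :=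
    (measurable_deriv g).pow_const _
  have hbound : IntervalIntegrable (fun τ => 1 + deriv g τ) volume b a :=
    (_root_.intervalIntegrable_const (c := (1:ℝ))).add (aux_deriv_intInt g hgmono hgdiff b a)
  refine hbound.mono_fun hmeas.aestronglyMeasurable ?_
  filter_upwards with x
  have h0 : 0 ≤ deriv g x := aux_deriv_nonneg g hgmono hgdiff x
  have hkey : (deriv g x) ^ (1 / p) ≤ 1 + deriv g x := by
    rcases le_total (deriv g x) 1 with hx1 | hx1
    · have : (deriv g x) ^ (1 / p) ≤ 1 :=
        Real.rpow_le_one h0 hx1 (by positivity)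
      linarith
    · have : (deriv g x) ^ (1 / p) ≤ (deriv g x) ^ (1 : ℝ) := by
        apply Real.rpow_le_rpow_of_exponent_le hx1
        rw [div_le_one (by linarith)]; linarith
      rw [Real.rpow_one] at this
      linarith
  have h0' : 0 ≤ (deriv g x) ^ (1 / p) := Real.rpow_nonneg h0 _
  rw [Real.norm_of_nonneg h0', Real.norm_of_nonneg (by linarith)]
  exact hkey

lemma aux_key_s1 (p : ℝ) (hp : 1 < p) (g : ℝ → ℝ) (hgmono : Monotone g)
    (hgdiff : Differentiable ℝ g) (b a : ℝ) (hba : b ≤ a) :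
    (∫ τ in b..a, (deriv g τ) ^ (1 / p)) ^ p ≤ (a - b) ^ (p - 1) * (g a - g b) := by
  set μ := volume.restrict (Ioc b a) with hμ
  haveI : IsFiniteMeasure μ := ⟨by
    rw [hμ, Measure.restrict_apply_univ]; exact measure_Ioc_lt_top⟩
  have h0 : ∀ x, 0 ≤ deriv g x := aux_deriv_nonneg g hgmono hgdiff
  have hp0 : (0:ℝ) < p := by linarith
  have hInt : Integrable (deriv g) μ :=
    (aux_deriv_intInt g hgmono hgdiff b a).1
  have hFTC : ∫ x, deriv g x ∂μ = g a - g b := by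
    have := intervalIntegral.integral_eq_sub_of_hasDerivAt
      (f := g) (f' := deriv g) (a := b) (b := a)
      (fun x _ => (hgdiff x).hasDerivAt) (aux_deriv_intInt g hgmono hgdiff b a)
    rwa [intervalIntegral.integral_of_le hba] at this
  set q : ℝ := p / (p - 1) with hq
  have hq0 : (0:ℝ) < q := div_pos hp0 (by linarith)
  have hpq : Real.HolderConjugate p q := (Real.holderConjugate_iff_eq_conjExponent hp).2 hq
  have hF : MemLp (fun x => (deriv g x) ^ (1 / p)) (ENNReal.ofReal p) μ := by
    have h1 : MemLp (deriv g) 1 μ := (memLp_one_iff_integrable).mpr hInt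
    have h2 := h1.norm_rpow_div (ENNReal.ofReal (1 / p))
    have e1 : (ENNReal.ofReal (1 / p)).toReal = 1 / p :=
      ENNReal.toReal_ofReal (by positivity)
    have e2 : (1 : ℝ≥0∞) / ENNReal.ofReal (1 / p) = ENNReal.ofReal p := by
      rw [one_div (ENNReal.ofReal (1 / p)), one_div p, ENNReal.ofReal_inv_of_pos hp0, inv_inv]
    rw [e1, e2] at h2
    have heq : (fun x => ‖deriv g x‖ ^ (1 / p)) = fun x => (deriv g x) ^ (1 / p) :=
      funext fun x => by rw [Real.norm_of_nonneg (h0 x)]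
    rwa [heq] at h2
  have hG1 : MemLp (fun _ : ℝ => (1:ℝ)) (ENNReal.ofReal q) μ := memLp_const 1
  have hHolder := integral_mul_le_Lp_mul_Lq_of_nonneg (μ := μ) hpq
    (f := fun x => (deriv g x) ^ (1 / p)) (g := fun _ => (1:ℝ))
    (Filter.Eventually.of_forall fun x => Real.rpow_nonneg (h0 x) _)
    (Filter.Eventually.of_forall fun _ => zero_le_one) hF hG1
  simp only [mul_one] at hHolder
  have e3 : ∀ x, ((deriv g x) ^ (1 / p)) ^ p = deriv g x := fun x => by
    rw [← Real.rpow_mul (h0 x), one_div_mul_cancel hp0.ne', Real.rpow_one]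
  simp only [e3, Real.one_rpow] at hHolder
  have e4 : ∫ _, (1:ℝ) ∂μ = a - b := by
    rw [MeasureTheory.integral_const, smul_eq_mul, mul_one, hμ, measureReal_def, Measure.restrict_apply_univ,
      Real.volume_Ioc, ENNReal.toReal_ofReal (by linarith)]
  rw [e4, hFTC] at hHolder
  have hIleft : ∫ τ in b..a, (deriv g τ) ^ (1 / p) = ∫ x, (deriv g x) ^ (1 / p) ∂μ := by
    rw [intervalIntegral.integral_of_le hba, hμ]
  have hggb : 0 ≤ g a - g b := sub_nonneg.2 (hgmono hba)
  have hab : 0 ≤ a - b := by linarith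
  have hLnonneg : 0 ≤ ∫ x, (deriv g x) ^ (1 / p) ∂μ :=
    integral_nonneg fun x => Real.rpow_nonneg (h0 x) _
  rw [hIleft]
  calc (∫ x, (deriv g x) ^ (1 / p) ∂μ) ^ p
      ≤ ((g a - g b) ^ (1 / p) * (a - b) ^ (1 / q)) ^ p :=
        Real.rpow_le_rpow hLnonneg hHolder hp0.le
    _ = ((g a - g b) ^ (1 / p)) ^ p * ((a - b) ^ (1 / q)) ^ p := by
        rw [Real.mul_rpow (Real.rpow_nonneg hggb _) (Real.rpow_nonneg hab _)]
    _ = (g a - g b) * (a - b) ^ (p - 1) := by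
        rw [← Real.rpow_mul hggb, one_div_mul_cancel hp0.ne', Real.rpow_one,
          ← Real.rpow_mul hab]
        congr 1
        rw [hq]
        field_simp
    _ = (a - b) ^ (p - 1) * (g a - g b) := by ring

lemma aux_main (p : ℝ) (hp : 1 < p) (g : ℝ → ℝ) (hgmono : Monotone g)
    (hgdiff : Differentiable ℝ g) (G : ℝ → ℝ)
    (hG : ∀ t : ℝ, G t = ∫ τ in (0:ℝ)..t, (deriv g τ) ^ (1 / p)) (b a : ℝ) (hba : b < a) :
    |G a - G b| ^ p ≤ |a - b| ^ (p - 2) * (a - b) * (g a - g b) := by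
  have hGdiff : G a - G b = ∫ τ in b..a, (deriv g τ) ^ (1 / p) := by
    rw [hG a, hG b, ← intervalIntegral.integral_add_adjacent_intervals
      (aux_rpow_intInt p hp g hgmono hgdiff 0 b) (aux_rpow_intInt p hp g hgmono hgdiff b a)]
    ring
  have hInn : 0 ≤ ∫ τ in b..a, (deriv g τ) ^ (1 / p) :=
    intervalIntegral.integral_nonneg hba.le
      (fun x _ => Real.rpow_nonneg (aux_deriv_nonneg g hgmono hgdiff x) _)
  rw [hGdiff, abs_of_nonneg hInn, abs_of_pos (sub_pos.2 hba)]
  have e : (a - b) ^ (p - 2) * (a - b) = (a - b) ^ (p - 1) := by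
    have : p - 1 = p - 2 + 1 := by ring
    rw [this, Real.rpow_add_one (sub_ne_zero.2 hba.ne')]
  rw [e]
  exact aux_key_s1 p hp g hgmono hgdiff b a hba.le

theorem stmt1 (p : ℝ) (hp : 1 < p) (g : ℝ → ℝ) (hgmono : Monotone g)
    (hgdiff : Differentiable ℝ g) (G : ℝ → ℝ)
    (hG : ∀ t : ℝ, G t = ∫ τ in (0:ℝ)..t, (deriv g τ) ^ (1 / p)) (a b : ℝ) :
    |G a - G b| ^ p ≤ |a - b| ^ (p - 2) * (a - b) * (g a - g b) := by
  rcases lt_trichotomy b a with h | rfl | h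
  · exact aux_main p hp g hgmono hgdiff G hG b a h
  · simp [Real.zero_rpow (by positivity : p ≠ 0)]
  · calc |G a - G b| ^ p = |G b - G a| ^ p := by rw [abs_sub_comm]
      _ ≤ |b - a| ^ (p - 2) * (b - a) * (g b - g a) :=
          aux_main p hp g hgmono hgdiff G hG a b h
      _ = |a - b| ^ (p - 2) * (a - b) * (g a - g b) := by rw [abs_sub_comm]; ring
end

section
/- Let 1 < p < ∞, 0 < δ < 1, and let X be a uniformly convex Banach space with norm ‖·‖ whose p-th power is strictly convex. Suppose u ∈ X minimizes I(v) = (1/p)‖v‖^p − (1/(1−δ)) Φ(v) over X, where Φ is positively homogeneous of degree 1−δ and Φ(u) = ‖u‖^p. Then for every v ∈ X with Φ(v) = 1, ‖u‖^{p(1−δ−p)/(1−δ)} ≤ ‖v‖^p, with equality attained at V = Φ(u)^{-1/(1-δ)} u. -/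
theorem stmt9 (p δ : ℝ) (hp : 1 < p) (hδ0 : 0 < δ) (hδ1 : δ < 1)
    {X : Type*} [NormedAddCommGroup X] [NormedSpace ℝ X] [UniformConvexSpace X]
    [CompleteSpace X]
    (hconv : StrictConvexOn ℝ Set.univ (fun v : X => ‖v‖ ^ p))
    (Φ : X → ℝ) (hhom : ∀ c : ℝ, 0 < c → ∀ v : X, Φ (c • v) = c ^ (1 - δ) * Φ v)
    (u : X) (hΦu : Φ u = ‖u‖ ^ p)
    (hmin : ∀ v : X, (1 / p) * ‖u‖ ^ p - (1 / (1 - δ)) * Φ u ≤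
      (1 / p) * ‖v‖ ^ p - (1 / (1 - δ)) * Φ v) :
    (∀ v : X, Φ v = 1 → ‖u‖ ^ (p * (1 - δ - p) / (1 - δ)) ≤ ‖v‖ ^ p) ∧
      ‖(Φ u ^ (-1 / (1 - δ))) • u‖ ^ p = ‖u‖ ^ (p * (1 - δ - p) / (1 - δ)) := by
  have h1δ : (0:ℝ) < 1 - δ := by linarith
  have hΦ0 : Φ 0 = 0 := by
    have h := hhom 2 (by norm_num) 0
    rw [smul_zero] at h
    have h2 : (1:ℝ) < (2:ℝ) ^ (1 - δ) :=
      Real.one_lt_rpow_iff_of_pos (by norm_num) |>.mpr (Or.inl ⟨by norm_num, h1δ⟩)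
    nlinarith
  have hq : (0:ℝ) < p + δ - 1 := by linarith
  by_cases hu : u = 0
  · subst hu
    have hnu : ‖(0:X)‖ = 0 := norm_zero
    have hexp : p * (1 - δ - p) / (1 - δ) ≠ 0 := by
      apply div_ne_zero
      · nlinarith
      · linarith
    constructor
    · intro v hv
      rw [hnu, Real.zero_rpow hexp]
      exact Real.rpow_nonneg (norm_nonneg v) p
    · have hΦu0 : Φ (0:X) = 0 := hΦ0
      rw [hΦu0, Real.zero_rpow (by intro h; rw [div_eq_zero_iff] at h; rcases h with h | h <;> linarith),
        zero_smul, norm_zero, Real.zero_rpow (by positivity)]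
      exact (Real.zero_rpow hexp).symm
  · have hU : 0 < ‖u‖ := norm_pos_iff.mpr hu
    constructor
    · intro v hv
      have hV : 0 < ‖v‖ := by
        rcases eq_or_ne v 0 with rfl | h
        · rw [hΦ0] at hv; norm_num at hv
        · exact norm_pos_iff.mpr h
      set q := p + δ - 1 with hqdef
      set lam := ‖v‖ ^ (-p / q) with hlam
      have hlampos : 0 < lam := Real.rpow_pos_of_pos hV _
      have hnorm : ‖lam • v‖ = lam * ‖v‖ := by
        rw [norm_smul, Real.norm_eq_abs, abs_of_pos hlampos]
      have key := hmin (lam • v)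
      rw [hnorm, hΦu, hhom lam hlampos v, hv, mul_one] at key
      -- compute (lam * ‖v‖)^p and lam^(1-δ) as ‖v‖^(p*(δ-1)/q)
      have e1 : (lam * ‖v‖) ^ p = ‖v‖ ^ (p * (δ - 1) / q) := by
        rw [Real.mul_rpow hlampos.le hV.le, hlam, ← Real.rpow_mul hV.le, ← Real.rpow_add hV]
        congr 1
        field_simp [h1δ.ne', hq.ne', (show p ≠ 0 by linarith)]
        ring
      have e2 : lam ^ (1 - δ) = ‖v‖ ^ (p * (δ - 1) / q) := by
        rw [hlam, ← Real.rpow_mul hV.le]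
        congr 1
        field_simp [h1δ.ne', hq.ne', (show p ≠ 0 by linarith)]
        ring
      rw [e1, e2] at key
      set M := ‖v‖ ^ (p * (δ - 1) / q) with hM
      have hMup : M ≤ ‖u‖ ^ p := by
        have hc : 1 / p - 1 / (1 - δ) < 0 := by
          rw [sub_neg, div_lt_div_iff₀ (by linarith) h1δ]
          nlinarith
        nlinarith [key]
      have hMpos : 0 < M := Real.rpow_pos_of_pos hV _
      have := Real.rpow_le_rpow_of_nonpos hMpos hMup
        (z := (1 - δ - p) / (1 - δ))
        (by apply div_nonpos_of_nonpos_of_nonneg <;> linarith)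
      calc ‖u‖ ^ (p * (1 - δ - p) / (1 - δ))
          = (‖u‖ ^ p) ^ ((1 - δ - p) / (1 - δ)) := by
            rw [← Real.rpow_mul hU.le]; congr 1; ring
        _ ≤ M ^ ((1 - δ - p) / (1 - δ)) := this
        _ = ‖v‖ ^ p := by
            rw [hM, ← Real.rpow_mul hV.le]
            congr 1
            field_simp [h1δ.ne', hq.ne', (show p ≠ 0 by linarith)]
            ring
    · rw [hΦu, norm_smul, Real.norm_eq_abs,
        abs_of_pos (Real.rpow_pos_of_pos (Real.rpow_pos_of_pos hU p) _),
        ← Real.rpow_mul hU.le,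
        Real.mul_rpow (Real.rpow_pos_of_pos hU _).le hU.le,
        ← Real.rpow_mul hU.le, ← Real.rpow_one ‖u‖]
      rw [← Real.rpow_mul hU.le, ← Real.rpow_mul hU.le, ← Real.rpow_add hU]
      congr 1
      · rw [Real.rpow_one]
      field_simp [h1δ.ne', hq.ne', (show p ≠ 0 by linarith)]
      ring
end

section
/- Let 0 < δ < 1 < p. Suppose C > 0, u ∈ X a normed space, f ≥ 0 integrable on Ω, and that (i) ‖u‖^p = ∫_Ω u^{1−δ} f dx, and (ii) for every v ∈ X, ∫_Ω |v| u^{−δ} f dx ≤ C ‖u‖^{p−1} ‖v‖. Then for every v ∈ X, ∫_Ω |v|^{1−δ} f dx ≤ C^{1−δ} ‖u‖^{p+δ−1} ‖v‖^{1−δ}, and hence the Sobolev-type inequality C' (∫_Ω |v|^{1−δ} f dx)^{p/(1−δ)} ≤ ‖v‖^p holds for a suitable constant C' > 0. -/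
open MeasureTheory ENNReal

theorem stmt10 {Ω : Type*} [MeasurableSpace Ω] (μ : Measure Ω) (p δ C : ℝ)
    (hδ0 : 0 < δ) (hδ1 : δ < 1) (hp : 1 < p) (hC : 0 < C)
    (f u : Ω → ℝ) (hf : Integrable f μ) (hf0 : ∀ x, 0 ≤ f x)
    (hu : Measurable u) (hu0 : ∀ x, 0 < u x)
    (X : Set (Ω → ℝ)) (nrm : (Ω → ℝ) → ℝ) (hnrm : ∀ w, 0 ≤ nrm w)
    (hXmeas : ∀ v ∈ X, Measurable v)
    (hint1 : Integrable (fun x => u x ^ (1 - δ) * f x) μ)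
    (h1 : nrm u ^ p = ∫ x, u x ^ (1 - δ) * f x ∂μ)
    (hint2 : ∀ v ∈ X, Integrable (fun x => |v x| * u x ^ (-δ) * f x) μ)
    (h2 : ∀ v ∈ X, ∫ x, |v x| * u x ^ (-δ) * f x ∂μ ≤ C * nrm u ^ (p - 1) * nrm v) :
    (∀ v ∈ X, ∫ x, |v x| ^ (1 - δ) * f x ∂μ ≤
        C ^ (1 - δ) * nrm u ^ (p + δ - 1) * nrm v ^ (1 - δ)) ∧
      ∃ C' : ℝ, 0 < C' ∧ ∀ v ∈ X,
        C' * (∫ x, |v x| ^ (1 - δ) * f x ∂μ) ^ (p / (1 - δ)) ≤ nrm v ^ p := by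
  have hδ1' : (0:ℝ) < 1 - δ := by linarith
  -- the main interpolation inequality
  have main : ∀ v ∈ X, ∫ x, |v x| ^ (1 - δ) * f x ∂μ ≤
      C ^ (1 - δ) * nrm u ^ (p + δ - 1) * nrm v ^ (1 - δ) := by
    intro v hv
    set g : Ω → ℝ := fun x => |v x| * u x ^ (-δ) * f x with hg_def
    set h : Ω → ℝ := fun x => u x ^ (1 - δ) * f x with hh_def
    have hg0 : ∀ x, 0 ≤ g x := fun x =>
      mul_nonneg (mul_nonneg (abs_nonneg _) (Real.rpow_nonneg (hu0 x).le _)) (hf0 x)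
    have hh0 : ∀ x, 0 ≤ h x := fun x =>
      mul_nonneg (Real.rpow_nonneg (hu0 x).le _) (hf0 x)
    have hgint : Integrable g μ := hint2 v hv
    have hhint : Integrable h μ := hint1
    -- conjugate exponents
    have hconj : (1 / (1 - δ)).HolderConjugate (1 / δ) := by
      rw [Real.holderConjugate_iff]; constructor
      · rw [lt_div_iff₀ hδ1']; linarith
      · simp only [one_div, inv_inv]; ring
    -- Memℒp facts
    have hmemg : MemLp (fun x => g x ^ (1 - δ)) (ENNReal.ofReal (1 / (1 - δ))) μ := by
      have := (memLp_one_iff_integrable.mpr hgint).norm_rpow_div (ENNReal.ofReal (1 - δ))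
      have he : (1 : ℝ≥0∞) / ENNReal.ofReal (1 - δ) = ENNReal.ofReal (1 / (1 - δ)) := by
        rw [one_div, one_div, ENNReal.ofReal_inv_of_pos hδ1']
      rw [ENNReal.toReal_ofReal hδ1'.le, he] at this
      refine this.congr_norm ((hgint.aemeasurable.pow_const (1 - δ)).aestronglyMeasurable)
        (Filter.Eventually.of_forall fun x => ?_)
      rw [Real.norm_of_nonneg (hg0 x)]
    have hmemh : MemLp (fun x => h x ^ δ) (ENNReal.ofReal (1 / δ)) μ := by
      have := (memLp_one_iff_integrable.mpr hhint).norm_rpow_div (ENNReal.ofReal δ)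
      have he : (1 : ℝ≥0∞) / ENNReal.ofReal δ = ENNReal.ofReal (1 / δ) := by
        rw [one_div, one_div, ENNReal.ofReal_inv_of_pos hδ0]
      rw [ENNReal.toReal_ofReal hδ0.le, he] at this
      refine this.congr_norm ((hhint.aemeasurable.pow_const δ).aestronglyMeasurable)
        (Filter.Eventually.of_forall fun x => ?_)
      rw [Real.norm_of_nonneg (hh0 x)]
    have holder := integral_mul_le_Lp_mul_Lq_of_nonneg hconj
      (Filter.Eventually.of_forall fun x => Real.rpow_nonneg (hg0 x) _)
      (Filter.Eventually.of_forall fun x => Real.rpow_nonneg (hh0 x) _)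
      hmemg hmemh
    -- identify the pieces in Hölder's inequality
    have hLHS : ∫ x, g x ^ (1 - δ) * h x ^ δ ∂μ = ∫ x, |v x| ^ (1 - δ) * f x ∂μ := by
      refine integral_congr_ae (Filter.Eventually.of_forall fun x => ?_)
      have hu0x := hu0 x
      rw [hg_def, hh_def]
      simp only
      rw [Real.mul_rpow (mul_nonneg (abs_nonneg _) (Real.rpow_nonneg hu0x.le _)) (hf0 x),
        Real.mul_rpow (abs_nonneg _) (Real.rpow_nonneg hu0x.le _),
        Real.mul_rpow (Real.rpow_nonneg hu0x.le _) (hf0 x),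
        ← Real.rpow_mul hu0x.le, ← Real.rpow_mul hu0x.le,
        show |v x| ^ (1 - δ) * u x ^ (-δ * (1 - δ)) * f x ^ (1 - δ) *
            (u x ^ ((1 - δ) * δ) * f x ^ δ) = |v x| ^ (1 - δ) *
            (u x ^ (-δ * (1 - δ)) * u x ^ ((1 - δ) * δ)) * (f x ^ (1 - δ) * f x ^ δ) from by ring,
        ← Real.rpow_add hu0x, show -δ * (1 - δ) + (1 - δ) * δ = 0 from by ring, Real.rpow_zero,
        ← Real.rpow_add' (hf0 x) (show (1 : ℝ) - δ + δ ≠ 0 from by norm_num),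
        show (1 : ℝ) - δ + δ = 1 from by ring, Real.rpow_one, mul_one]
    have hgpow : ∫ x, (g x ^ (1 - δ)) ^ (1 / (1 - δ)) ∂μ = ∫ x, g x ∂μ := by
      refine integral_congr_ae (Filter.Eventually.of_forall fun x => ?_)
      show (g x ^ (1 - δ)) ^ (1 / (1 - δ)) = g x
      rw [← Real.rpow_mul (hg0 x), mul_one_div, div_self hδ1'.ne', Real.rpow_one]
    have hhpow : ∫ x, (h x ^ δ) ^ (1 / δ) ∂μ = ∫ x, h x ∂μ := by
      refine integral_congr_ae (Filter.Eventually.of_forall fun x => ?_)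
      show (h x ^ δ) ^ (1 / δ) = h x
      rw [← Real.rpow_mul (hh0 x), mul_one_div, div_self hδ0.ne', Real.rpow_one]
    rw [hLHS, hgpow, hhpow, one_div_one_div, one_div_one_div] at holder
    -- bound the right-hand side
    have hgI0 : 0 ≤ ∫ x, g x ∂μ := integral_nonneg hg0
    have hhI0 : 0 ≤ ∫ x, h x ∂μ := integral_nonneg hh0
    have step1 : (∫ x, g x ∂μ) ^ (1 - δ) ≤ (C * nrm u ^ (p - 1) * nrm v) ^ (1 - δ) :=
      Real.rpow_le_rpow hgI0 (h2 v hv) hδ1'.le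
    have step2 : (∫ x, h x ∂μ) ^ δ = (nrm u ^ p) ^ δ := by rw [h1]
    calc ∫ x, |v x| ^ (1 - δ) * f x ∂μ
        ≤ (∫ x, g x ∂μ) ^ (1 - δ) * (∫ x, h x ∂μ) ^ δ := holder
      _ ≤ (C * nrm u ^ (p - 1) * nrm v) ^ (1 - δ) * (nrm u ^ p) ^ δ := by
          rw [step2]
          exact mul_le_mul_of_nonneg_right step1 (Real.rpow_nonneg (Real.rpow_nonneg (hnrm u) p) _)
      _ = C ^ (1 - δ) * nrm u ^ (p + δ - 1) * nrm v ^ (1 - δ) := by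
          rw [Real.mul_rpow (mul_nonneg hC.le (Real.rpow_nonneg (hnrm u) _)) (hnrm v),
            Real.mul_rpow hC.le (Real.rpow_nonneg (hnrm u) _),
            ← Real.rpow_mul (hnrm u), ← Real.rpow_mul (hnrm u)]
          rw [show (p + δ - 1 : ℝ) = (p - 1) * (1 - δ) + p * δ by ring,
            Real.rpow_add' (hnrm u) (by nlinarith)]
          ring
  refine ⟨main, ?_⟩
  -- second part
  set D : ℝ := C ^ (1 - δ) * nrm u ^ (p + δ - 1) with hD_def
  have hD0 : 0 ≤ D := mul_nonneg (Real.rpow_nonneg hC.le _) (Real.rpow_nonneg (hnrm u) _)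
  set E : ℝ := p / (1 - δ) with hE_def
  have hE0 : 0 < E := div_pos (by linarith) hδ1'
  refine ⟨(D + 1) ^ (-E), Real.rpow_pos_of_pos (by linarith) _, fun v hv => ?_⟩
  have hI0 : 0 ≤ ∫ x, |v x| ^ (1 - δ) * f x ∂μ :=
    integral_nonneg fun x => mul_nonneg (Real.rpow_nonneg (abs_nonneg _) _) (hf0 x)
  have hIE : (∫ x, |v x| ^ (1 - δ) * f x ∂μ) ^ E ≤ (D * nrm v ^ (1 - δ)) ^ E :=
    Real.rpow_le_rpow hI0 (main v hv) hE0.le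
  calc (D + 1) ^ (-E) * (∫ x, |v x| ^ (1 - δ) * f x ∂μ) ^ E
      ≤ (D + 1) ^ (-E) * (D * nrm v ^ (1 - δ)) ^ E := by
        exact mul_le_mul_of_nonneg_left hIE (Real.rpow_nonneg (by linarith) _)
    _ = ((D + 1) ^ (-E) * D ^ E) * (nrm v ^ (1 - δ)) ^ E := by
        rw [Real.mul_rpow hD0 (Real.rpow_nonneg (hnrm v) _)]; ring
    _ ≤ 1 * nrm v ^ p := by
        have h1' : (D + 1) ^ (-E) * D ^ E ≤ 1 := by
          rw [Real.rpow_neg (show (0:ℝ) ≤ D + 1 by linarith), inv_mul_eq_div,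
            ← Real.div_rpow hD0 (show (0:ℝ) ≤ D + 1 by linarith)]
          exact Real.rpow_le_one (by positivity)
            (by rw [div_le_one (by linarith)]; linarith) hE0.le
        have h2' : (nrm v ^ (1 - δ)) ^ E = nrm v ^ p := by
          rw [← Real.rpow_mul (hnrm v), hE_def, mul_div_cancel₀ _ hδ1'.ne']
        rw [h2']
        exact mul_le_mul_of_nonneg_right h1' (Real.rpow_nonneg (hnrm v) _)
    _ = nrm v ^ p := one_mul _
end

section
/- Let 1 < p < ∞ and μ > 0. Define the truncation T_μ : ℝ → ℝ by T_μ(s) = s if |s| ≤ μ and T_μ(s) = μ s/|s| otherwise. Let u_n, u : ℝ^N → ℝ with u ≥ u_n pointwise. Then for all x, y ∈ ℝ^N, (|u_n(x) − u_n(y)|^{p−2}(u_n(x) − u_n(y)) − |u(x) − u(y)|^{p−2}(u(x) − u(y))) · (T_μ((u_n − u)(x)) − T_μ((u_n − u)(y))) ≥ 0. -/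
private lemma phi_eq (p : ℝ) (hp : 1 < p) {t : ℝ} (ht : 0 ≤ t) :
    |t| ^ (p - 2) * t = t ^ (p - 1) := by
  rcases eq_or_lt_of_le ht with h | h
  · simp [← h, Real.zero_rpow (by linarith : p - 1 ≠ 0)]
  · rw [abs_of_pos h, ← Real.rpow_add_one (ne_of_gt h)]
    ring_nf

private lemma phi_mono_nonneg (p : ℝ) (hp : 1 < p) {a b : ℝ} (hb : 0 ≤ b) (h : b ≤ a) :
    |b| ^ (p - 2) * b ≤ |a| ^ (p - 2) * a := by
  rw [phi_eq p hp hb, phi_eq p hp (hb.trans h)]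
  exact Real.rpow_le_rpow hb h (by linarith)

private lemma phi_mono (p : ℝ) (hp : 1 < p) {a b : ℝ} (h : b ≤ a) :
    |b| ^ (p - 2) * b ≤ |a| ^ (p - 2) * a := by
  rcases le_total 0 b with hb | hb
  · exact phi_mono_nonneg p hp hb h
  · rcases le_total 0 a with ha | ha
    · have h1 : |b| ^ (p - 2) * b ≤ 0 :=
        mul_nonpos_of_nonneg_of_nonpos (Real.rpow_nonneg (abs_nonneg b) _) hb
      have h2 : 0 ≤ |a| ^ (p - 2) * a :=
        mul_nonneg (Real.rpow_nonneg (abs_nonneg a) _) ha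
      linarith
    · have key : |(-a)| ^ (p - 2) * (-a) ≤ |(-b)| ^ (p - 2) * (-b) :=
        phi_mono_nonneg p hp (by linarith) (by linarith)
      rw [abs_neg, abs_neg] at key
      nlinarith [key]

private lemma T_clamp (μ : ℝ) (hμ : 0 < μ) (T : ℝ → ℝ)
    (hT : ∀ s : ℝ, T s = if |s| ≤ μ then s else μ * s / |s|) (s : ℝ) :
    T s = max (-μ) (min s μ) := by
  rw [hT s]
  rcases le_or_gt (|s|) μ with h | h
  · rw [if_pos h]
    rw [abs_le] at h
    rw [min_eq_left h.2, max_eq_right h.1]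
  · rw [if_neg (not_le.mpr h)]
    rcases le_total 0 s with hs | hs
    · rw [abs_of_nonneg hs] at h ⊢
      rw [mul_div_assoc, div_self (by linarith), mul_one,
        min_eq_right h.le, max_eq_right (by linarith)]
    · rw [abs_of_nonpos hs] at h
      have hs' : s < 0 := by linarith
      have he : μ * s / |s| = -μ := by
        rw [abs_of_neg hs', div_neg, mul_div_assoc, div_self hs'.ne, mul_one]
      rw [he, min_eq_left (by linarith), max_eq_left (by linarith)]

private lemma T_mono (μ : ℝ) (hμ : 0 < μ) (T : ℝ → ℝ)
    (hT : ∀ s : ℝ, T s = if |s| ≤ μ then s else μ * s / |s|)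
    {s t : ℝ} (h : s ≤ t) : T s ≤ T t := by
  rw [T_clamp μ hμ T hT, T_clamp μ hμ T hT]
  exact max_le_max le_rfl (min_le_min h le_rfl)

theorem stmt11 (p μ : ℝ) (hp : 1 < p) (hμ : 0 < μ) (N : ℕ)
    (un u : (Fin N → ℝ) → ℝ) (hle : ∀ z, un z ≤ u z)
    (T : ℝ → ℝ) (hT : ∀ s : ℝ, T s = if |s| ≤ μ then s else μ * s / |s|) :
    ∀ x y : Fin N → ℝ,
      0 ≤ (|un x - un y| ^ (p - 2) * (un x - un y) -
            |u x - u y| ^ (p - 2) * (u x - u y)) *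
          (T (un x - u x) - T (un y - u y)) := by
  intro x y
  rcases le_total (un x - un y) (u x - u y) with h | h
  · have h1 := phi_mono p hp h
    have h2 : T (un x - u x) ≤ T (un y - u y) :=
      T_mono μ hμ T hT (by linarith)
    nlinarith
  · have h1 := phi_mono p hp h
    have h2 : T (un y - u y) ≤ T (un x - u x) :=
      T_mono μ hμ T hT (by linarith)
    exact mul_nonneg (by linarith) (by linarith)
end
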